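/- Let R := Polynomial ℝ (variable denoted z) and A := MvPolynomial (Fin 2) R with x := X 0, y := X 1, z := C Polynomial.X. Let S := {g : Fin 3 → A | g 0 − g 1 ∈ Ideal.span {x}, g 1 − g 2 ∈ Ideal.span {y}, g 0 − g 2 ∈ Ideal.span {x + y − z}}. Define v₀ := (1,1,1), v₁ := (0, z·x − x², z·x − x² − x·y), v₂ := (0, 0, z·y − x·y − y²), v₃ := (0, x·y, 0) as elements of Fin 3 → A. Then the family consisting of the elements x^a · y^b • v_i for all a, b ∈ ℕ and i ∈ {0,1,2}, together with the elements y^b • v₃ for all b ∈ ℕ, is a basis of S as an R-module: it is R-linearly independent and its R-span equals S. -/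

import Mathlib

/-- The base ring `R = ℝ[z]`. -/
abbrev RR : Type := Polynomial ℝ

/-- The algebra `A = ℝ[z][x,y] = MvPolynomial (Fin 2) ℝ[z]`. -/
abbrev AA : Type := MvPolynomial (Fin 2) RR

/-- `x ∈ A`. -/
noncomputable def xA : AA := MvPolynomial.X 0
/-- `y ∈ A`. -/
noncomputable def yA : AA := MvPolynomial.X 1
/-- `z ∈ A` (the image of the coefficient variable). -/
noncomputable def zA : AA := MvPolynomial.C Polynomial.X

/-- The quasi-spline module
`S = {(g₁,g₂,g₃) | g₁−g₂ ∈ (x), g₂−g₃ ∈ (y), g₁−g₃ ∈ (x+y−z)} ⊆ A³`. -/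
noncomputable def SA : Submodule AA (Fin 3 → AA) :=
  Submodule.comap
      ((LinearMap.proj 0 : (Fin 3 → AA) →ₗ[AA] AA) - (LinearMap.proj 1 : (Fin 3 → AA) →ₗ[AA] AA))
      (Ideal.span {xA}) ⊓
    Submodule.comap
      ((LinearMap.proj 1 : (Fin 3 → AA) →ₗ[AA] AA) - (LinearMap.proj 2 : (Fin 3 → AA) →ₗ[AA] AA))
      (Ideal.span {yA}) ⊓
    Submodule.comap
      ((LinearMap.proj 0 : (Fin 3 → AA) →ₗ[AA] AA) - (LinearMap.proj 2 : (Fin 3 → AA) →ₗ[AA] AA))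
      (Ideal.span {xA + yA - zA})

/-- `v₀ = (1,1,1)`. -/
noncomputable def v0 : Fin 3 → AA := ![1, 1, 1]
/-- `v₁ = (0, zx − x², zx − x² − xy)`. -/
noncomputable def v1 : Fin 3 → AA := ![0, zA * xA - xA ^ 2, zA * xA - xA ^ 2 - xA * yA]
/-- `v₂ = (0, 0, zy − xy − y²)`. -/
noncomputable def v2 : Fin 3 → AA := ![0, 0, zA * yA - xA * yA - yA ^ 2]
/-- `v₃ = (0, xy, 0)`. -/
noncomputable def v3 : Fin 3 → AA := ![0, xA * yA, 0]

/-- The putative `ℝ[z]`-basis of `S`: the elements `xᵃyᵇ • vᵢ` for `a b : ℕ`, `i ∈ {0,1,2}`,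
together with `yᵇ • v₃` for `b : ℕ`. -/
noncomputable def fam : (ℕ × ℕ × Fin 3) ⊕ ℕ → (Fin 3 → AA)
  | Sum.inl (a, b, i) => (xA ^ a * yA ^ b) • ![v0, v1, v2] i
  | Sum.inr b => yA ^ b • v3

open MvPolynomial

/-- substitution x ↦ 0 -/
noncomputable def s1 : AA →ₐ[RR] AA := aeval ![0, yA]
/-- substitution y ↦ 0 -/
noncomputable def s2 : AA →ₐ[RR] AA := aeval ![xA, 0]
/-- substitution x ↦ z - y -/
noncomputable def s3 : AA →ₐ[RR] AA := aeval ![zA - yA, yA]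
/-- substitution x ↦ z -/
noncomputable def s4 : AA →ₐ[RR] AA := aeval ![zA, yA]
/-- substitution x ↦ z, y ↦ 0 -/
noncomputable def s5 : AA →ₐ[RR] AA := aeval ![zA, 0]

@[simp] lemma s1_x : s1 xA = 0 := by simp [s1, xA]
@[simp] lemma s1_y : s1 yA = yA := by simp [s1, yA]
@[simp] lemma s1_z : s1 zA = zA := by simp [s1, zA, algebraMap_eq]
@[simp] lemma s2_x : s2 xA = xA := by simp [s2, xA]
@[simp] lemma s2_y : s2 yA = 0 := by simp [s2, yA]
@[simp] lemma s2_z : s2 zA = zA := by simp [s2, zA, algebraMap_eq]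
@[simp] lemma s3_x : s3 xA = zA - yA := by simp [s3, xA]
@[simp] lemma s3_y : s3 yA = yA := by simp [s3, yA]
@[simp] lemma s3_z : s3 zA = zA := by simp [s3, zA, algebraMap_eq]
@[simp] lemma s4_x : s4 xA = zA := by simp [s4, xA]
@[simp] lemma s4_y : s4 yA = yA := by simp [s4, yA]
@[simp] lemma s4_z : s4 zA = zA := by simp [s4, zA, algebraMap_eq]
@[simp] lemma s5_x : s5 xA = zA := by simp [s5, xA]
@[simp] lemma s5_y : s5 yA = 0 := by simp [s5, yA]
@[simp] lemma s5_z : s5 zA = zA := by simp [s5, zA, algebraMap_eq]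

lemma L0 (f : Fin 2 → AA) (I : Ideal AA) (h : ∀ i, MvPolynomial.X i - f i ∈ I)
    (p : AA) : p - aeval f p ∈ I := by
  induction p using MvPolynomial.induction_on with
  | C r => simp [algebraMap_eq]
  | add p q hp hq =>
      have := I.add_mem hp hq
      simpa [sub_add_sub_comm] using this
  | mul_X p i hp =>
      have : p * X i - (aeval f p) * f i
          = (p - aeval f p) * X i + (aeval f p) * (X i - f i) := by ring
      rw [map_mul, aeval_X, this]
      exact I.add_mem (I.mul_mem_right _ hp) (I.mul_mem_left _ (h i))

lemma zA_ne : zA ≠ 0 := by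
  simpa [zA, MvPolynomial.C_eq_zero] using Polynomial.X_ne_zero
lemma xA_ne : xA ≠ 0 := MvPolynomial.X_ne_zero _
lemma yA_ne : yA ≠ 0 := MvPolynomial.X_ne_zero _
lemma zx_ne : zA - xA ≠ 0 := fun h => by
  have : s1 (zA - xA) = 0 := by rw [h, map_zero]
  simp only [map_sub, s1_z, s1_x, sub_zero] at this
  exact zA_ne this
lemma xyz_ne : xA + yA - zA ≠ 0 := fun h => by
  have : (aeval ![0,0] : AA →ₐ[RR] AA) (xA + yA - zA) = 0 := by rw [h, map_zero]
  simp [xA, yA, zA, algebraMap_eq] at this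
lemma zxy_ne : zA - xA - yA ≠ 0 := fun h => by
  have : (aeval ![0,0] : AA →ₐ[RR] AA) (zA - xA - yA) = 0 := by rw [h, map_zero]
  simp [xA, yA, zA, algebraMap_eq] at this


lemma mem_x (p : AA) : p ∈ Ideal.span {xA} ↔ s1 p = 0 := by
  constructor
  · rintro h
    obtain ⟨t, rfl⟩ := Ideal.mem_span_singleton.mp h
    rw [map_mul, s1_x, zero_mul]
  · intro h
    have h2 : p - s1 p ∈ Ideal.span {xA} :=
      L0 ![0, yA] (Ideal.span {xA}) (fun i => by
        match i with
        | 0 => simpa [xA] using Ideal.subset_span (Set.mem_singleton xA)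
        | 1 => simp [yA]) p
    rwa [h, sub_zero] at h2

lemma mem_y (p : AA) : p ∈ Ideal.span {yA} ↔ s2 p = 0 := by
  constructor
  · rintro h
    obtain ⟨t, rfl⟩ := Ideal.mem_span_singleton.mp h
    rw [map_mul, s2_y, zero_mul]
  · intro h
    have h2 : p - s2 p ∈ Ideal.span {yA} :=
      L0 ![xA, 0] (Ideal.span {yA}) (fun i => by
        match i with
        | 0 => simp [xA]
        | 1 => simpa [yA] using Ideal.subset_span (Set.mem_singleton yA)) p
    rwa [h, sub_zero] at h2

lemma s3_gen : s3 (xA + yA - zA) = 0 := by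
  simp only [map_add, map_sub, s3_x, s3_y, s3_z]; ring

lemma mem_xyz (p : AA) : p ∈ Ideal.span {xA + yA - zA} ↔ s3 p = 0 := by
  constructor
  · rintro h
    obtain ⟨t, rfl⟩ := Ideal.mem_span_singleton.mp h
    rw [map_mul, s3_gen, zero_mul]
  · intro h
    have h2 : p - s3 p ∈ Ideal.span {xA + yA - zA} :=
      L0 ![zA - yA, yA] (Ideal.span {xA + yA - zA}) (fun i => by
        match i with
        | 0 =>
          have e : (X 0 : AA) - ![zA - yA, yA] 0 = xA + yA - zA := by
            simp only [Matrix.cons_val_zero]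
            rw [show (X 0 : AA) = xA from rfl]; ring
          rw [e]; exact Ideal.subset_span rfl
        | 1 => simp [yA]) p
    rwa [h, sub_zero] at h2

lemma mem_zx (p : AA) : p ∈ Ideal.span {zA - xA} ↔ s4 p = 0 := by
  constructor
  · rintro h
    obtain ⟨t, rfl⟩ := Ideal.mem_span_singleton.mp h
    have e : s4 (zA - xA) = 0 := by rw [map_sub, s4_x, s4_z, sub_self]
    rw [map_mul, e, zero_mul]
  · intro h
    have h2 : p - s4 p ∈ Ideal.span {zA - xA} :=
      L0 ![zA, yA] (Ideal.span {zA - xA}) (fun i => by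
        match i with
        | 0 =>
          have e : (X 0 : AA) - ![zA, yA] 0 = -1 * (zA - xA) := by
            simp only [Matrix.cons_val_zero]
            rw [show (X 0 : AA) = xA from rfl]; ring
          rw [e]; exact Ideal.mul_mem_left _ _ (Ideal.subset_span rfl)
        | 1 => simp [yA]) p
    rwa [h, sub_zero] at h2

-- compositions
lemma comp_s4_s1 (p : AA) : s4 (s1 p) = s1 p := by
  have e : s4.comp s1 = s1 := by
    apply algHom_ext
    intro i
    match i with
    | 0 => show s4 (s1 xA) = s1 xA; rw [s1_x, map_zero]
    | 1 => show s4 (s1 yA) = s1 yA; rw [s1_y, s4_y]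
  calc s4 (s1 p) = (s4.comp s1) p := rfl
  _ = s1 p := by rw [e]

lemma comp_s2_s4 (p : AA) : s2 (s4 p) = s5 p := by
  have e : s2.comp s4 = s5 := by
    apply algHom_ext
    intro i
    match i with
    | 0 => show s2 (s4 xA) = s5 xA; rw [s4_x, s2_z, s5_x]
    | 1 => show s2 (s4 yA) = s5 yA; rw [s4_y, s2_y, s5_y]
  calc s2 (s4 p) = (s2.comp s4) p := rfl
  _ = s5 p := by rw [e]

lemma comp_s1_s4 (p : AA) : s1 (s4 p) = s4 p := by
  have e : s1.comp s4 = s4 := by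
    apply algHom_ext
    intro i
    match i with
    | 0 => show s1 (s4 xA) = s4 xA; rw [s4_x, s1_z]
    | 1 => show s1 (s4 yA) = s4 yA; rw [s4_y, s1_y]
  calc s1 (s4 p) = (s1.comp s4) p := rfl
  _ = s4 p := by rw [e]



lemma mem_SA (g : Fin 3 → AA) :
    g ∈ SA ↔ g 0 - g 1 ∈ Ideal.span {xA} ∧ g 1 - g 2 ∈ Ideal.span {yA} ∧
      g 0 - g 2 ∈ Ideal.span {xA + yA - zA} := by
  simp [SA, Submodule.mem_inf, Submodule.mem_comap, LinearMap.sub_apply, LinearMap.proj_apply,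
    and_assoc]

lemma monom_eq (u : Fin 2 →₀ ℕ) : (monomial u (1 : RR) : AA) = xA ^ (u 0) * yA ^ (u 1) := by
  have hu : u = Finsupp.single 0 (u 0) + Finsupp.single 1 (u 1) := by
    ext i
    match i with
    | 0 => simp
    | 1 => simp
  rw [xA, yA, X_pow_eq_monomial, X_pow_eq_monomial, monomial_mul, one_mul, ← hu]

lemma span_top (p : AA) :
    p ∈ Submodule.span RR (Set.range (fun ab : ℕ × ℕ => xA ^ ab.1 * yA ^ ab.2)) := by
  induction p using MvPolynomial.induction_on' with
  | monomial u a =>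
      have : (monomial u a : AA) = a • (xA ^ (u 0) * yA ^ (u 1)) := by
        rw [← monom_eq, smul_monomial, smul_eq_mul, mul_one]
      rw [this]
      exact Submodule.smul_mem _ _ (Submodule.subset_span ⟨(u 0, u 1), rfl⟩)
  | add p q hp hq => exact Submodule.add_mem _ hp hq

lemma span_y (p : AA) (hp : s1 p = p) :
    p ∈ Submodule.span RR (Set.range (fun b : ℕ => yA ^ b)) := by
  have h1 : p ∈ Submodule.map s1.toLinearMap
      (Submodule.span RR (Set.range (fun ab : ℕ × ℕ => xA ^ ab.1 * yA ^ ab.2))) := by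
    have h1' := Submodule.mem_map_of_mem (f := s1.toLinearMap) (span_top p)
    rwa [show s1.toLinearMap p = p from hp] at h1'
  rw [Submodule.map_span] at h1
  refine Submodule.span_le.mpr ?_ h1
  rintro q ⟨_, ⟨⟨a, b⟩, rfl⟩, rfl⟩
  show s1 (xA ^ a * yA ^ b) ∈ _
  rw [map_mul, map_pow, map_pow, s1_x, s1_y]
  rcases a with _ | a
  · have hb : yA ^ b ∈ Set.range (fun b : ℕ => yA ^ b) := ⟨b, rfl⟩
    simpa using Submodule.subset_span hb
  · simp [zero_pow]

lemma yfix_s1 (c : AA) (hc : c ∈ Submodule.span RR (Set.range (fun b : ℕ => yA ^ b))) :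
    s1 c = c := by
  have hker : Submodule.span RR (Set.range (fun b : ℕ => yA ^ b)) ≤
      LinearMap.ker (s1.toLinearMap - LinearMap.id) := by
    rw [Submodule.span_le]
    rintro _ ⟨b, rfl⟩
    simp [LinearMap.mem_ker, LinearMap.sub_apply, map_pow]
  have := hker hc
  rw [LinearMap.mem_ker, LinearMap.sub_apply] at this
  have h2 : s1 c - c = 0 := this
  linear_combination (norm := abel) h2

lemma key (c₀ c₁ c₂ c₃ : AA) (h3 : s1 c₃ = c₃)
    (h : c₀ • v0 + c₁ • v1 + c₂ • v2 + c₃ • v3 = 0) :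
    c₀ = 0 ∧ c₁ = 0 ∧ c₂ = 0 ∧ c₃ = 0 := by
  have e0 := congrFun h 0
  have e1 := congrFun h 1
  have e2 := congrFun h 2
  simp only [v0, v1, v2, v3, Pi.add_apply, Pi.smul_apply, smul_eq_mul, Pi.zero_apply,
    Matrix.cons_val_zero, Matrix.cons_val_one, Matrix.head_cons, Matrix.cons_val_two,
    Matrix.tail_cons, mul_zero, mul_one, add_zero, zero_add] at e0 e1 e2
  -- e0 : c₀ = 0
  have f1 : xA * (c₁ * (zA - xA) + c₃ * yA) = 0 := by linear_combination e1 - e0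
  have g1 : c₁ * (zA - xA) + c₃ * yA = 0 := by
    rcases mul_eq_zero.mp f1 with h' | h'
    · exact absurd h' xA_ne
    · exact h'
  have g2 : c₃ * yA = 0 := by
    have := congrArg s4 g1
    simp only [map_add, map_mul, map_sub, s4_x, s4_z, s4_y, map_zero, sub_self, mul_zero,
      zero_add] at this
    rwa [show s4 c₃ = c₃ by rw [← h3, comp_s4_s1]] at this
  have hc3 : c₃ = 0 := by
    rcases mul_eq_zero.mp g2 with h' | h'
    · exact h'
    · exact absurd h' yA_ne
  have hc1 : c₁ = 0 := by
    rw [hc3, zero_mul, add_zero] at g1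
    rcases mul_eq_zero.mp g1 with h' | h'
    · exact h'
    · exact absurd h' zx_ne
  have f2 : c₂ * (yA * (zA - xA - yA)) = 0 := by
    linear_combination e2 - e0 - (zA * xA - xA ^ 2 - xA * yA) * hc1
  have hc2 : c₂ = 0 := by
    rcases mul_eq_zero.mp f2 with h' | h'
    · exact h'
    · rcases mul_eq_zero.mp h' with h'' | h''
      · exact absurd h'' yA_ne
      · exact absurd h'' zxy_ne
  exact ⟨e0, hc1, hc2, hc3⟩

lemma dec (g : Fin 3 → AA) (hg : g ∈ SA) :
    ∃ c₁ c₂ c₃ : AA, s1 c₃ = c₃ ∧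
      g = (g 0) • v0 + c₁ • v1 + c₂ • v2 + c₃ • v3 := by
  obtain ⟨h1, h2, h3⟩ := (mem_SA g).mp hg
  -- step 1 : g 1 - g 0 = xA * h'
  obtain ⟨h', hh'⟩ : ∃ h', g 1 - g 0 = xA * h' := by
    obtain ⟨t, ht⟩ := Ideal.mem_span_singleton.mp h1
    exact ⟨-t, by linear_combination -ht⟩
  -- step 2 : divide h' by (z - x)
  obtain ⟨c₁, hc1⟩ : ∃ c₁, h' - s4 h' = (zA - xA) * c₁ := by
    have := L0 ![zA, yA] (Ideal.span {zA - xA}) (fun i => by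
      match i with
      | 0 =>
        have e : (X 0 : AA) - ![zA, yA] 0 = -1 * (zA - xA) := by
          simp only [Matrix.cons_val_zero]
          rw [show (X 0 : AA) = xA from rfl]; ring
        rw [e]; exact Ideal.mul_mem_left _ _ (Ideal.subset_span rfl)
      | 1 => simp [yA]) h'
    exact Ideal.mem_span_singleton.mp this
  -- step 3 : s5 h' = 0
  have hs5 : s5 h' = 0 := by
    have t2 : s5 (g 1) - s5 (g 2) = 0 := by
      obtain ⟨t, ht⟩ := Ideal.mem_span_singleton.mp h2
      have := congrArg s5 ht
      simp only [map_sub, map_mul, s5_y, zero_mul] at this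
      exact this
    have t3 : s5 (g 0) - s5 (g 2) = 0 := by
      obtain ⟨t, ht⟩ := Ideal.mem_span_singleton.mp h3
      have := congrArg s5 ht
      simp only [map_sub, map_mul, map_add, s5_y, s5_x, s5_z] at this
      rw [this]; ring
    have t1 : s5 (g 1) - s5 (g 0) = zA * s5 h' := by
      have := congrArg s5 hh'
      simp only [map_sub, map_mul, s5_x] at this
      exact this
    have : zA * s5 h' = 0 := by linear_combination t2 - t3 - t1
    rcases mul_eq_zero.mp this with h' | h'
    · exact absurd h' zA_ne
    · exact h'
  -- step 4 : s4 h' = yA * c₃ with c₃ x-free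
  obtain ⟨c₃, hc3⟩ : ∃ c₃, s4 h' = yA * c₃ := by
    have : s2 (s4 h') = 0 := by rw [comp_s2_s4]; exact hs5
    exact Ideal.mem_span_singleton.mp ((mem_y _).mpr this)
  have hc3fix : s1 c₃ = c₃ := by
    have hr : s1 (s4 h') = s4 h' := comp_s1_s4 h'
    rw [hc3, map_mul, s1_y] at hr
    exact mul_left_cancel₀ yA_ne hr
  -- step 5 : w ∈ (yA)
  set w : AA := g 2 - g 0 - c₁ * (zA * xA - xA ^ 2 - xA * yA) with hw_def
  obtain ⟨u, hu⟩ : ∃ u, w = yA * u := by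
    have hs2w : s2 w = 0 := by
      have eqA : s2 (g 1) - s2 (g 2) = 0 := by
        have := (mem_y _).mp h2
        rw [map_sub] at this
        exact this
      have eqB : s2 (g 1) - s2 (g 0) = xA * s2 h' := by
        have := congrArg s2 hh'
        simp only [map_sub, map_mul, s2_x] at this
        exact this
      have eqC : s2 h' - s2 (s4 h') = (zA - xA) * s2 c₁ := by
        have := congrArg s2 hc1
        simp only [map_sub, map_mul, s2_x, s2_z] at this
        exact this
      have eqD : s2 (s4 h') = 0 := by rw [comp_s2_s4]; exact hs5
      have : s2 w = s2 (g 2) - s2 (g 0) - s2 c₁ * (zA * xA - xA ^ 2) := by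
        rw [hw_def]
        simp only [map_sub, map_mul, map_pow, s2_x, s2_y, s2_z, mul_zero]
        ring
      rw [this]
      linear_combination eqB - eqA + xA * eqC + xA * eqD
    exact Ideal.mem_span_singleton.mp ((mem_y _).mpr hs2w)
  -- step 6 : u ∈ (x + y - z)
  obtain ⟨q, hq⟩ : ∃ q, u = (xA + yA - zA) * q := by
    have hs3w : s3 w = 0 := by
      have eqA : s3 (g 0) - s3 (g 2) = 0 := by
        have := (mem_xyz _).mp h3
        rw [map_sub] at this
        exact this
      have : s3 w = s3 (g 2) - s3 (g 0) - s3 c₁ *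
          (zA * (zA - yA) - (zA - yA) ^ 2 - (zA - yA) * yA) := by
        rw [hw_def]
        simp only [map_sub, map_mul, map_pow, s3_x, s3_y, s3_z]
      rw [this]
      linear_combination -eqA
    have hs3u : s3 u = 0 := by
      have := congrArg s3 hu
      rw [hs3w, map_mul, s3_y] at this
      rcases mul_eq_zero.mp this.symm with h' | h'
      · exact absurd h' yA_ne
      · exact h'
    exact Ideal.mem_span_singleton.mp ((mem_xyz _).mpr hs3u)
  refine ⟨c₁, -q, c₃, hc3fix, ?_⟩
  funext i
  match i with
  | 0 =>
    show g 0 = _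
    simp only [v0, v1, v2, v3, Pi.add_apply, Pi.smul_apply, smul_eq_mul,
      Matrix.cons_val_zero, mul_zero, mul_one, add_zero]
  | 1 =>
    show g 1 = _
    simp only [v0, v1, v2, v3, Pi.add_apply, Pi.smul_apply, smul_eq_mul,
      Matrix.cons_val_one, Matrix.head_cons, Matrix.cons_val_zero, mul_zero, mul_one, add_zero]
    linear_combination hh' + xA * hc1 + xA * hc3
  | 2 =>
    show g 2 = _
    simp only [v0, v1, v2, v3, Pi.add_apply, Pi.smul_apply, smul_eq_mul,
      Matrix.cons_val_two, Matrix.tail_cons, Matrix.head_cons, mul_zero, mul_one, add_zero]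
    have hw2 : g 2 - g 0 - c₁ * (zA * xA - xA ^ 2 - xA * yA) = yA * u := hu
    linear_combination hw2 + yA * hq

lemma v0_mem : v0 ∈ SA := by
  refine (mem_SA v0).mpr ⟨?_, ?_, ?_⟩ <;>
    · simp only [v0, Matrix.cons_val_zero, Matrix.cons_val_one, Matrix.head_cons,
        Matrix.cons_val_two, Matrix.tail_cons, sub_self]
      exact Ideal.zero_mem _

lemma v1_mem : v1 ∈ SA := by
  refine (mem_SA v1).mpr ⟨?_, ?_, ?_⟩ <;>
    simp only [v1, Matrix.cons_val_zero, Matrix.cons_val_one, Matrix.head_cons,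
      Matrix.cons_val_two, Matrix.tail_cons]
  · exact Ideal.mem_span_singleton.mpr ⟨xA - zA, by ring⟩
  · exact Ideal.mem_span_singleton.mpr ⟨xA, by ring⟩
  · exact Ideal.mem_span_singleton.mpr ⟨xA, by ring⟩

lemma v2_mem : v2 ∈ SA := by
  refine (mem_SA v2).mpr ⟨?_, ?_, ?_⟩ <;>
    simp only [v2, Matrix.cons_val_zero, Matrix.cons_val_one, Matrix.head_cons,
      Matrix.cons_val_two, Matrix.tail_cons]
  · simp only [sub_self]; exact Ideal.zero_mem _
  · exact Ideal.mem_span_singleton.mpr ⟨xA + yA - zA, by ring⟩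
  · exact Ideal.mem_span_singleton.mpr ⟨yA, by ring⟩

lemma v3_mem : v3 ∈ SA := by
  refine (mem_SA v3).mpr ⟨?_, ?_, ?_⟩ <;>
    simp only [v3, Matrix.cons_val_zero, Matrix.cons_val_one, Matrix.head_cons,
      Matrix.cons_val_two, Matrix.tail_cons]
  · exact Ideal.mem_span_singleton.mpr ⟨-yA, by ring⟩
  · exact Ideal.mem_span_singleton.mpr ⟨xA, by ring⟩
  · simp only [sub_self]; exact Ideal.zero_mem _

lemma gen_smul_mem (v : Fin 3 → AA)
    (hv : ∀ a b : ℕ, (xA ^ a * yA ^ b) • v ∈ Submodule.span RR (Set.range fam)) (c : AA) :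
    c • v ∈ Submodule.span RR (Set.range fam) := by
  set μ : AA →ₗ[RR] (Fin 3 → AA) :=
    (LinearMap.toSpanSingleton AA (Fin 3 → AA) v).restrictScalars RR with hμ
  have h0 : c • v = μ c := rfl
  rw [h0]
  have h1 : μ c ∈ Submodule.map μ
      (Submodule.span RR (Set.range (fun ab : ℕ × ℕ => xA ^ ab.1 * yA ^ ab.2))) :=
    Submodule.mem_map_of_mem (span_top c)
  rw [Submodule.map_span] at h1
  refine Submodule.span_le.mpr ?_ h1
  rintro _ ⟨_, ⟨⟨a, b⟩, rfl⟩, rfl⟩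
  exact hv a b

lemma gen_smul_mem_y (c : AA) (hc : s1 c = c) :
    c • v3 ∈ Submodule.span RR (Set.range fam) := by
  set μ : AA →ₗ[RR] (Fin 3 → AA) :=
    (LinearMap.toSpanSingleton AA (Fin 3 → AA) v3).restrictScalars RR with hμ
  have h0 : c • v3 = μ c := rfl
  rw [h0]
  have h1 : μ c ∈ Submodule.map μ
      (Submodule.span RR (Set.range (fun b : ℕ => yA ^ b))) :=
    Submodule.mem_map_of_mem (span_y c hc)
  rw [Submodule.map_span] at h1
  refine Submodule.span_le.mpr ?_ h1
  rintro _ ⟨_, ⟨b, rfl⟩, rfl⟩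
  exact Submodule.subset_span ⟨Sum.inr b, rfl⟩

lemma span_fam_eq :
    Submodule.span RR (Set.range fam) = Submodule.restrictScalars RR SA := by
  apply le_antisymm
  · rw [Submodule.span_le]
    rintro _ ⟨idx, rfl⟩
    rcases idx with ⟨a, b, i⟩ | b
    · show (xA ^ a * yA ^ b) • ![v0, v1, v2] i ∈ SA
      refine Submodule.smul_mem _ _ ?_
      match i with
      | 0 => exact v0_mem
      | 1 => exact v1_mem
      | 2 => exact v2_mem
    · show yA ^ b • v3 ∈ SA
      exact Submodule.smul_mem _ _ v3_mem
  · intro g hg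
    obtain ⟨c₁, c₂, c₃, hfix, hdec⟩ := dec g hg
    rw [hdec]
    refine Submodule.add_mem _ (Submodule.add_mem _ (Submodule.add_mem _ ?_ ?_) ?_) ?_
    · exact gen_smul_mem v0 (fun a b => Submodule.subset_span ⟨Sum.inl (a, b, 0), rfl⟩) _
    · exact gen_smul_mem v1 (fun a b => Submodule.subset_span ⟨Sum.inl (a, b, 1), rfl⟩) _
    · exact gen_smul_mem v2 (fun a b => Submodule.subset_span ⟨Sum.inl (a, b, 2), rfl⟩) _
    · exact gen_smul_mem_y c₃ hfix

noncomputable def Phi : ((Fin 3 → AA) × AA) →ₗ[RR] (Fin 3 → AA) where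
  toFun p := p.1 0 • v0 + p.1 1 • v1 + p.1 2 • v2 + p.2 • v3
  map_add' p q := by
    simp only [Prod.fst_add, Pi.add_apply, Prod.snd_add, add_smul]
    abel
  map_smul' r p := by
    simp only [Prod.smul_fst, Pi.smul_apply, Prod.smul_snd, smul_assoc, smul_add,
      RingHom.id_apply]

noncomputable def Gfam : (ℕ × ℕ × Fin 3) ⊕ ℕ → ((Fin 3 → AA) × AA)
  | Sum.inl (a, b, i) => (Pi.single i (xA ^ a * yA ^ b), 0)
  | Sum.inr b => (0, yA ^ b)

lemma fam_eq_phi : fam = ⇑Phi ∘ Gfam := by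
  funext idx
  rcases idx with ⟨a, b, i⟩ | b
  · show (xA ^ a * yA ^ b) • ![v0, v1, v2] i = Phi (Pi.single i (xA ^ a * yA ^ b), 0)
    match i with
    | 0 =>
      show _ = Phi (Pi.single 0 (xA ^ a * yA ^ b), 0)
      simp [Phi, Pi.single_apply]
    | 1 =>
      show _ = Phi (Pi.single 1 (xA ^ a * yA ^ b), 0)
      simp [Phi, Pi.single_apply]
    | 2 =>
      show _ = Phi (Pi.single 2 (xA ^ a * yA ^ b), 0)
      simp [Phi, Pi.single_apply]
  · show yA ^ b • v3 = Phi (0, yA ^ b)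
    simp [Phi]

noncomputable def bmon : Module.Basis (Fin 2 →₀ ℕ) RR AA := MvPolynomial.basisMonomials (Fin 2) RR

lemma bmon_eq (u : Fin 2 →₀ ℕ) : bmon u = xA ^ (u 0) * yA ^ (u 1) := by
  rw [← monom_eq]
  simp [bmon, MvPolynomial.coe_basisMonomials]

noncomputable def fs (a b : ℕ) : Fin 2 →₀ ℕ := Finsupp.single 0 a + Finsupp.single 1 b

@[simp] lemma fs_0 (a b : ℕ) : fs a b 0 = a := by simp [fs]
@[simp] lemma fs_1 (a b : ℕ) : fs a b 1 = b := by simp [fs]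

lemma li_G1 : LinearIndependent RR (Gfam ∘ Sum.inl) := by
  have hb : LinearIndependent RR
      (⇑(LinearMap.inl RR (Fin 3 → AA) AA) ∘
        ((Pi.basis (fun _ : Fin 3 => bmon)) ∘ (fun p : ℕ × ℕ × Fin 3 => ⟨p.2.2, fs p.1 p.2.1⟩))) := by
    apply LinearIndependent.map'
    · apply (Pi.basis (fun _ : Fin 3 => bmon)).linearIndependent.comp
      rintro ⟨a, b, i⟩ ⟨a', b', i'⟩ h
      obtain ⟨hi, hf⟩ := Sigma.mk.inj_iff.mp h
      have hf' : fs a b = fs a' b' := by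
        exact eq_of_heq hf
      have ha : a = a' := by
        have := congrArg (fun u : Fin 2 →₀ ℕ => u 0) hf'
        simpa using this
      have hb : b = b' := by
        have := congrArg (fun u : Fin 2 →₀ ℕ => u 1) hf'
        simpa using this
      exact Prod.ext ha (Prod.ext hb hi)
    · exact Submodule.ker_inl
  have he : Gfam ∘ Sum.inl = ⇑(LinearMap.inl RR (Fin 3 → AA) AA) ∘
      ((Pi.basis (fun _ : Fin 3 => bmon)) ∘ (fun p : ℕ × ℕ × Fin 3 => ⟨p.2.2, fs p.1 p.2.1⟩)) := by
    funext p
    obtain ⟨a, b, i⟩ := p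
    simp only [Function.comp_apply, Pi.basis_apply, LinearMap.inl_apply]
    rw [bmon_eq]
    simp [Gfam]
  rw [he]
  exact hb

lemma li_G2 : LinearIndependent RR (Gfam ∘ Sum.inr) := by
  have hb : LinearIndependent RR
      (⇑(LinearMap.inr RR (Fin 3 → AA) AA) ∘ (⇑bmon ∘ (fun b : ℕ => Finsupp.single 1 b))) := by
    apply LinearIndependent.map'
    · exact bmon.linearIndependent.comp _ (Finsupp.single_injective 1)
    · exact Submodule.ker_inr
  have he : Gfam ∘ Sum.inr = ⇑(LinearMap.inr RR (Fin 3 → AA) AA) ∘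
      (⇑bmon ∘ (fun b : ℕ => Finsupp.single 1 b)) := by
    funext b
    simp only [Function.comp_apply, LinearMap.inr_apply]
    rw [bmon_eq]
    simp [Gfam, Finsupp.single_apply]
  rw [he]
  exact hb

lemma li_G : LinearIndependent RR Gfam := by
  rw [linearIndependent_sum]
  refine ⟨li_G1, li_G2, ?_⟩
  have hl : Submodule.span RR (Set.range (Gfam ∘ Sum.inl)) ≤
      LinearMap.ker (LinearMap.snd RR (Fin 3 → AA) AA) := by
    rw [Submodule.span_le]
    rintro _ ⟨⟨a, b, i⟩, rfl⟩
    simp [Gfam, LinearMap.mem_ker]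
  have hr : Submodule.span RR (Set.range (Gfam ∘ Sum.inr)) ≤
      LinearMap.ker (LinearMap.fst RR (Fin 3 → AA) AA) := by
    rw [Submodule.span_le]
    rintro _ ⟨b, rfl⟩
    simp [Gfam, LinearMap.mem_ker]
  rw [Submodule.disjoint_def]
  intro w hw1 hw2
  have h1 : w.2 = 0 := hl hw1
  have h2 : w.1 = 0 := hr hw2
  exact Prod.ext h2 h1

lemma li_fam : LinearIndependent RR fam := by
  rw [fam_eq_phi]
  apply li_G.map
  have hP : Submodule.span RR (Set.range Gfam) ≤
      (⊤ : Submodule RR (Fin 3 → AA)).prod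
        (Submodule.span RR (Set.range (fun b : ℕ => yA ^ b))) := by
    rw [Submodule.span_le]
    rintro _ ⟨idx, rfl⟩
    rcases idx with ⟨a, b, i⟩ | b
    · exact Submodule.mem_prod.mpr ⟨trivial, Submodule.zero_mem _⟩
    · exact Submodule.mem_prod.mpr ⟨trivial, Submodule.subset_span ⟨b, rfl⟩⟩
  rw [Submodule.disjoint_def]
  intro w hw1 hw2
  have hy : s1 w.2 = w.2 := yfix_s1 _ (Submodule.mem_prod.mp (hP hw1)).2
  have h0 : w.1 0 • v0 + w.1 1 • v1 + w.1 2 • v2 + w.2 • v3 = 0 := hw2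
  obtain ⟨e0, e1, e2, e3⟩ := key _ _ _ _ hy h0
  refine Prod.ext ?_ e3
  funext i
  match i with
  | 0 => exact e0
  | 1 => exact e1
  | 2 => exact e2

/-- The family `fam` is a basis of `S` as an `ℝ[z]`-module: it is
`ℝ[z]`-linearly independent and its `ℝ[z]`-span is exactly `S`. -/
theorem stmt_7 :
    LinearIndependent RR fam ∧
      Submodule.span RR (Set.range fam) = Submodule.restrictScalars RR SA :=
  ⟨li_fam, span_fam_eq⟩
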